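/- Let X be a Hermitian operator on ℂ^d ⊗ ℂ^D. Then X = 1_d ⊗ J for some Hermitian D×D matrix J if and only if for every vector ψ ∈ ℂ^D the partial expectation ⟨ψ|X|ψ⟩_E is a scalar multiple of the identity 1_d. -/

import Mathlib

open Matrix Complex
open scoped Kronecker

/-- The partial expectation `⟨ψ|X|ψ⟩_E` of an operator `X` on `ℂ^d ⊗ ℂ^D`
with respect to an environment vector `ψ ∈ ℂ^D`. -/
noncomputable def pexp {d D : ℕ} (X : Matrix (Fin d × Fin D) (Fin d × Fin D) ℂ)
    (ψ : Fin D → ℂ) : Matrix (Fin d) (Fin d) ℂ :=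
  fun i j => ∑ a, ∑ b, star (ψ a) * X (i, a) (j, b) * ψ b

lemma two_sum {D : ℕ} (a b : Fin D) (hab : a ≠ b) (c1 c2 : ℂ) (f : Fin D → ℂ) :
    ∑ x, (if x = a then c1 else if x = b then c2 else 0) * f x = c1 * f a + c2 * f b := by
  have : ∀ x, (if x = a then c1 else if x = b then c2 else 0) * f x =
      (if x = a then c1 * f x else 0) + (if x = b then c2 * f x else 0) := by
    intro x
    by_cases hx : x = a <;> by_cases hx' : x = b
    · exact absurd (hx.symm.trans hx') hab
    all_goals simp [hx, hx', hab, Ne.symm hab]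
  simp only [this, Finset.sum_add_distrib, Finset.sum_ite_eq', Finset.mem_univ, if_true]

lemma quad_zero {D : ℕ} (M : Matrix (Fin D) (Fin D) ℂ)
    (h : ∀ ψ : Fin D → ℂ, ∑ a, ∑ b, star (ψ a) * M a b * ψ b = 0) : M = 0 := by
  have diag : ∀ a, M a a = 0 := by
    intro a
    have := h (Pi.single a 1)
    simpa [Pi.single_apply, apply_ite (star : ℂ → ℂ), ite_mul, mul_ite,
      Finset.sum_ite_eq'] using this
  have key : ∀ (a b : Fin D) (c1 c2 : ℂ), a ≠ b →
      star c1 * M a a * c1 + star c1 * M a b * c2 +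
      (star c2 * M b a * c1 + star c2 * M b b * c2) = 0 := by
    intro a b c1 c2 hab
    have hh := h (fun x => if x = a then c1 else if x = b then c2 else 0)
    have e1 : ∀ x : Fin D, ∑ y, star ((fun x => if x = a then c1 else if x = b then c2 else 0) x)
        * M x y * (if y = a then c1 else if y = b then c2 else 0) =
        star (if x = a then c1 else if x = b then c2 else 0) * (c1 * M x a + c2 * M x b) := by
      intro x
      have := two_sum a b hab c1 c2 (fun y => M x y)
      calc ∑ y, star (if x = a then c1 else if x = b then c2 else 0) * M x y *
            (if y = a then c1 else if y = b then c2 else 0)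
          = ∑ y, (if y = a then c1 else if y = b then c2 else 0) *
            (star (if x = a then c1 else if x = b then c2 else 0) * M x y) := by
            apply Finset.sum_congr rfl; intro y _; ring
        _ = c1 * (star (if x = a then c1 else if x = b then c2 else 0) * M x a) +
            c2 * (star (if x = a then c1 else if x = b then c2 else 0) * M x b) :=
            two_sum a b hab c1 c2 _
        _ = _ := by ring
    rw [Finset.sum_congr rfl (fun x _ => e1 x)] at hh
    have e2 : ∑ x, star (if x = a then c1 else if x = b then c2 else 0) * (c1 * M x a + c2 * M x b)
        = star c1 * (c1 * M a a + c2 * M a b) + star c2 * (c1 * M b a + c2 * M b b) := by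
      calc ∑ x, star (if x = a then c1 else if x = b then c2 else 0) * (c1 * M x a + c2 * M x b)
          = ∑ x, (if x = a then star c1 else if x = b then star c2 else 0) *
              (c1 * M x a + c2 * M x b) := by
            apply Finset.sum_congr rfl; intro x _
            by_cases hx : x = a <;> by_cases hx' : x = b <;> simp [hx, hx', hab, Ne.symm hab]
        _ = _ := two_sum a b hab (star c1) (star c2) _
    rw [e2] at hh
    linear_combination hh
  ext a b
  by_cases hab : a = b
  · subst hab; simpa using diag a
  · have h1 := key a b 1 1 hab
    have h2 := key a b 1 Complex.I hab
    rw [diag a, diag b] at h1 h2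
    simp only [mul_zero, zero_mul, mul_one, one_mul, star_one, add_zero, zero_add] at h1 h2
    rw [Complex.star_def, Complex.conj_I] at h2
    have h2' : Complex.I * (M a b - M b a) = 0 := by linear_combination h2
    rcases mul_eq_zero.mp h2' with h | h
    · exact absurd h Complex.I_ne_zero
    · simp only [Matrix.zero_apply]
      linear_combination (h1 + h) / 2

theorem stmt_4 {d D : ℕ}
    (X : Matrix (Fin d × Fin D) (Fin d × Fin D) ℂ) (hX : X.IsHermitian) :
    (∃ J : Matrix (Fin D) (Fin D) ℂ, J.IsHermitian ∧
        X = (1 : Matrix (Fin d) (Fin d) ℂ) ⊗ₖ J) ↔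
      (∀ ψ : Fin D → ℂ, ∃ c : ℂ, pexp X ψ = c • (1 : Matrix (Fin d) (Fin d) ℂ)) := by
  constructor
  · rintro ⟨J, hJ, rfl⟩ ψ
    refine ⟨∑ a, ∑ b, star (ψ a) * J a b * ψ b, ?_⟩
    ext i j
    simp only [pexp, Matrix.kroneckerMap_apply, Matrix.smul_apply, smul_eq_mul,
      Finset.sum_mul, Finset.mul_sum]
    apply Finset.sum_congr rfl; intro a _
    apply Finset.sum_congr rfl; intro b _
    ring
  · intro h
    rcases Nat.eq_zero_or_pos d with hd | hd
    · refine ⟨0, Matrix.isHermitian_zero, ?_⟩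
      subst hd
      ext ⟨i, a⟩ ⟨j, b⟩
      exact absurd i.2 (by omega)
    · set i₀ : Fin d := ⟨0, hd⟩
      -- off-diagonal blocks vanish
      have off : ∀ (i j : Fin d), i ≠ j → ∀ a b, X (i, a) (j, b) = 0 := by
        intro i j hij a b
        have hz : (fun a b => X (i, a) (j, b) : Matrix (Fin D) (Fin D) ℂ) = 0 := by
          apply quad_zero
          intro ψ
          obtain ⟨c, hc⟩ := h ψ
          have := congrFun (congrFun hc i) j
          simpa [pexp, Matrix.one_apply, hij] using this
        exact congrFun (congrFun hz a) b
      -- diagonal blocks are all equal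
      have diagblk : ∀ (i : Fin d) a b, X (i, a) (i, b) = X (i₀, a) (i₀, b) := by
        intro i a b
        have hz : (fun a b => X (i, a) (i, b) - X (i₀, a) (i₀, b) :
            Matrix (Fin D) (Fin D) ℂ) = 0 := by
          apply quad_zero
          intro ψ
          obtain ⟨c, hc⟩ := h ψ
          have h1 := congrFun (congrFun hc i) i
          have h2 := congrFun (congrFun hc i₀) i₀
          simp only [pexp, Matrix.smul_apply, Matrix.one_apply_eq, smul_eq_mul, mul_one] at h1 h2
          have : ∑ a, ∑ b, star (ψ a) * (X (i, a) (i, b) - X (i₀, a) (i₀, b)) * ψ b =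
              (∑ a, ∑ b, star (ψ a) * X (i, a) (i, b) * ψ b) -
              (∑ a, ∑ b, star (ψ a) * X (i₀, a) (i₀, b) * ψ b) := by
            rw [← Finset.sum_sub_distrib]
            apply Finset.sum_congr rfl; intro a _
            rw [← Finset.sum_sub_distrib]
            apply Finset.sum_congr rfl; intro b _
            ring
          rw [this, h1, h2, sub_self]
        have := congrFun (congrFun hz a) b
        simpa [sub_eq_zero] using this
      refine ⟨fun a b => X (i₀, a) (i₀, b), ?_, ?_⟩
      · ext a b
        show star (X (i₀, b) (i₀, a)) = X (i₀, a) (i₀, b)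
        have := congrFun (congrFun hX ((i₀, a) : Fin d × Fin D)) (i₀, b)
        simpa [Matrix.conjTranspose_apply] using this
      · ext ⟨i, a⟩ ⟨j, b⟩
        show X (i, a) (j, b) = (1 : Matrix (Fin d) (Fin d) ℂ) i j * X (i₀, a) (i₀, b)
        simp only [Matrix.one_apply]
        by_cases hij : i = j
        · subst hij
          simp [diagblk i a b]
        · simp [hij, off i j hij a b]
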